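/- arXiv:1512.07043 — 2 statements merged into one kernel-verified Lean document; each statement's English description precedes it below -/
import Mathlib

section
/- A Metzler matrix A is Hurwitz stable if and only if A is nonsingular and all entries of A⁻¹ are nonpositive. -/
open Matrix

def IsMetzler {n : ℕ} (A : Matrix (Fin n) (Fin n) ℝ) : Prop :=
  ∀ i j, i ≠ j → 0 ≤ A i j

def IsHurwitz {n : ℕ} (A : Matrix (Fin n) (Fin n) ℝ) : Prop :=
  ∀ μ ∈ spectrum ℂ (A.map (Complex.ofReal)), μ.re < 0

attribute [local instance] Matrix.linftyOpNormedRing Matrix.linftyOpNormedAlgebra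

namespace MetzlerAux

variable {n : ℕ}

lemma entry_norm_le (A : Matrix (Fin n) (Fin n) ℂ) (i j : Fin n) : ‖A i j‖ ≤ ‖A‖ := by
  have : ‖A i j‖₊ ≤ ‖A‖₊ := by
    rw [Matrix.linfty_opNNNorm_def]
    exact le_trans
      (Finset.single_le_sum (f := fun j => ‖A i j‖₊) (fun _ _ => zero_le) (Finset.mem_univ j))
      (Finset.le_sup (f := fun i => ∑ j, ‖A i j‖₊) (Finset.mem_univ i))
  exact_mod_cast this

lemma mem_spectrum_iff_det (M : Matrix (Fin n) (Fin n) ℂ) (z : ℂ) :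
    z ∈ spectrum ℂ M ↔ (z • (1 : Matrix (Fin n) (Fin n) ℂ) - M).det = 0 := by
  rw [spectrum.mem_iff, Algebra.algebraMap_eq_smul_one, Matrix.isUnit_iff_isUnit_det,
    isUnit_iff_ne_zero, not_not]

lemma pow_entry_nonneg {M : Matrix (Fin n) (Fin n) ℝ} (h : ∀ i j, 0 ≤ M i j) (k : ℕ) :
    ∀ i j, 0 ≤ (M ^ k) i j := by
  induction k with
  | zero =>
    intro i j
    rw [pow_zero, Matrix.one_apply]
    split <;> norm_num
  | succ k ih =>
    intro i j
    rw [pow_succ, Matrix.mul_apply]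
    exact Finset.sum_nonneg fun l _ => mul_nonneg (ih i l) (h l j)

lemma map_ofReal_pow (M : Matrix (Fin n) (Fin n) ℝ) (k : ℕ) :
    (M.map Complex.ofReal) ^ k = (M ^ k).map Complex.ofReal := by
  have h1 : ∀ N : Matrix (Fin n) (Fin n) ℝ, N.map Complex.ofReal =
      (Complex.ofRealHom.mapMatrix : Matrix (Fin n) (Fin n) ℝ →+* _) N := fun _ => rfl
  rw [h1, h1, ← map_pow]

lemma map_ofReal_det (M : Matrix (Fin n) (Fin n) ℝ) :
    (M.map Complex.ofReal).det = (M.det : ℂ) := by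
  have h1 : M.map Complex.ofReal =
      (Complex.ofRealHom.mapMatrix : Matrix (Fin n) (Fin n) ℝ →+* _) M := rfl
  rw [h1, ← RingHom.map_det]; rfl

set_option maxHeartbeats 1000000 in
/-- The hard direction: Hurwitz implies invertible with nonpositive inverse. -/
theorem forward (A : Matrix (Fin n) (Fin n) ℝ) (hM : IsMetzler A) (hH : IsHurwitz A) :
    IsUnit A.det ∧ ∀ i j, A⁻¹ i j ≤ 0 := by
  set Ac := A.map Complex.ofReal with hAc
  have h0 : (0 : ℂ) ∉ spectrum ℂ Ac := fun h => by simpa using hH 0 h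
  have hdetc : Ac.det ≠ 0 := by
    intro hd
    apply h0
    rw [mem_spectrum_iff_det]
    simp [Matrix.det_neg, hd]
  have hdet : IsUnit A.det := by
    rw [isUnit_iff_ne_zero]
    intro hd
    exact hdetc (by rw [map_ofReal_det, hd, Complex.ofReal_zero])
  refine ⟨hdet, ?_⟩
  rcases isEmpty_or_nonempty (Fin n) with hn | hn
  · exact fun i => isEmptyElim i
  obtain ⟨lam0, hlam0, hmax⟩ := (spectrum.isCompact Ac).exists_isMaxOn (spectrum.nonempty Ac)
    (Complex.continuous_re.continuousOn)
  set δ : ℝ := -lam0.re with hδdef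
  have hδ : 0 < δ := by
    have := hH lam0 hlam0
    simp only [hδdef]; linarith
  set K : ℝ := ‖Ac‖ with hK
  have hKnn : 0 ≤ K := norm_nonneg _
  set s : ℝ := max 1 (max ((K ^ 2 + 1) / (2 * δ)) (∑ i, |A i i|)) with hs
  have hs1 : (1 : ℝ) ≤ s := le_max_left _ _
  have hs0 : 0 < s := lt_of_lt_of_le one_pos hs1
  have hsK : (K ^ 2 + 1) / (2 * δ) ≤ s := le_trans (le_max_left _ _) (le_max_right _ _)
  have hsd : ∀ i, 0 ≤ A i i + s := by
    intro i
    have h1 : |A i i| ≤ s :=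
      le_trans (Finset.single_le_sum (f := fun i => |A i i|) (fun _ _ => abs_nonneg _)
        (Finset.mem_univ i)) (le_trans (le_max_right _ _) (le_max_right _ _))
    have := neg_abs_le (A i i)
    linarith
  have hsne : (s : ℂ) ≠ 0 := Complex.ofReal_ne_zero.mpr hs0.ne'
  set Cr : Matrix (Fin n) (Fin n) ℝ := s⁻¹ • (A + s • 1) with hCr
  set C : Matrix (Fin n) (Fin n) ℂ := Cr.map Complex.ofReal with hC
  have hCpos : ∀ i j, 0 ≤ Cr i j := by
    intro i j
    rcases eq_or_ne i j with rfl | hij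
    · simp only [hCr, Matrix.smul_apply, Matrix.add_apply, Matrix.one_apply_eq, smul_eq_mul,
        mul_one]
      exact mul_nonneg (inv_nonneg.2 hs0.le) (by have := hsd i; linarith)
    · simp only [hCr, Matrix.smul_apply, Matrix.add_apply, Matrix.one_apply_ne hij, smul_eq_mul,
        mul_zero, add_zero]
      exact mul_nonneg (inv_nonneg.2 hs0.le) (hM i j hij)
  have hsC : (s : ℂ) • C = Ac + (s : ℂ) • 1 := by
    ext i j
    rcases eq_or_ne i j with rfl | hij
    · simp only [hC, hCr, hAc, Matrix.smul_apply, Matrix.map_apply, Matrix.add_apply,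
        Matrix.one_apply_eq, smul_eq_mul, mul_one]
      push_cast
      field_simp
    · simp only [hC, hCr, hAc, Matrix.smul_apply, Matrix.map_apply, Matrix.add_apply,
        Matrix.one_apply_ne hij, smul_eq_mul, mul_zero, add_zero]
      push_cast
      field_simp
  have hAcC : Ac = (-(s : ℂ)) • (1 - C) := by
    rw [smul_sub, neg_smul, neg_smul, sub_neg_eq_add, hsC]
    abel
  have hspecC : ∀ z : ℂ, z ∈ spectrum ℂ C → ((s : ℂ) * z - s) ∈ spectrum ℂ Ac := by
    intro z hz
    rw [mem_spectrum_iff_det] at hz ⊢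
    have key : z • (1 : Matrix (Fin n) (Fin n) ℂ) - C =
        ((s : ℂ)⁻¹) • (((s : ℂ) * z - s) • 1 - Ac) := by
      rw [hAcC]
      match_scalars <;> field_simp [hsne] <;> ring
    rw [key, Matrix.det_smul] at hz
    have hsni : ((s : ℂ)⁻¹) ≠ 0 := inv_ne_zero hsne
    rcases mul_eq_zero.mp hz with h | h
    · exact absurd h (pow_ne_zero _ hsni)
    · exact h
  set r : ℝ := Real.sqrt (1 - 1 / s ^ 2) with hr
  have hs2 : (1 : ℝ) ≤ s ^ 2 := by nlinarith
  have h1s2 : 1 / s ^ 2 ≤ 1 := by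
    rw [div_le_one (by positivity)]; exact hs2
  have h1s2' : 0 < 1 / s ^ 2 := by positivity
  have hr1 : r < 1 := by
    have h := Real.sqrt_lt_sqrt (by linarith : (0:ℝ) ≤ 1 - 1 / s ^ 2)
      (by linarith : 1 - 1 / s ^ 2 < 1)
    rwa [Real.sqrt_one] at h
  have hρ : spectralRadius ℂ C ≤ ENNReal.ofReal r := by
    rw [spectralRadius]
    refine iSup₂_le fun z hz => ?_
    have hlam := hspecC z hz
    have hre : ((s : ℂ) * z - s).re ≤ -δ := by
      have := hmax hlam
      simp only [Set.mem_setOf_eq] at this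
      simp only [hδdef, neg_neg]
      exact this
    have hnorm : ‖(s : ℂ) * z - s‖ ≤ K := spectrum.norm_le_norm_of_mem hlam
    set lam : ℂ := (s : ℂ) * z - s with hlamdef
    have hz' : z = (lam + s) / s := by
      rw [hlamdef]; field_simp; ring
    have e1 : ‖lam + (s : ℂ)‖ ^ 2 = (lam.re + s) ^ 2 + lam.im ^ 2 := by
      rw [Complex.sq_norm, Complex.normSq_apply]
      simp only [Complex.add_re, Complex.add_im, Complex.ofReal_re, Complex.ofReal_im, add_zero]
      ring
    have e2 : lam.re ^ 2 + lam.im ^ 2 ≤ K ^ 2 := by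
      have h3 : lam.re ^ 2 + lam.im ^ 2 = ‖lam‖ ^ 2 := by
        rw [Complex.sq_norm, Complex.normSq_apply]; ring
      nlinarith [norm_nonneg lam]
    have h2δ : K ^ 2 + 1 ≤ 2 * δ * s := by
      rw [div_le_iff₀ (by positivity)] at hsK
      linarith
    have e3 : ‖lam + (s : ℂ)‖ ^ 2 ≤ s ^ 2 - 1 := by
      nlinarith
    have hznorm : ‖z‖ ≤ r := by
      have h4 : ‖z‖ ^ 2 ≤ 1 - 1 / s ^ 2 := by
        have h5 : ‖z‖ = ‖lam + (s : ℂ)‖ / s := by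
          rw [hz', norm_div, Complex.norm_real, Real.norm_eq_abs, abs_of_pos hs0]
        rw [h5, div_pow, div_le_iff₀ (by positivity)]
        have h6 : (1 - 1 / s ^ 2) * s ^ 2 = s ^ 2 - 1 := by field_simp
        rw [h6]
        exact e3
      calc ‖z‖ = Real.sqrt (‖z‖ ^ 2) := (Real.sqrt_sq (norm_nonneg _)).symm
        _ ≤ r := Real.sqrt_le_sqrt h4
    rw [← enorm_eq_nnnorm, ← ofReal_norm]
    exact ENNReal.ofReal_le_ofReal hznorm
  have hρ1 : spectralRadius ℂ C < 1 :=
    lt_of_le_of_lt hρ (ENNReal.ofReal_lt_one.mpr hr1)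
  obtain ⟨m, hm1, hmlt⟩ : ∃ m : ℕ, 1 ≤ m ∧ ‖C ^ m‖ < 1 := by
    have ht := spectrum.pow_nnnorm_pow_one_div_tendsto_nhds_spectralRadius C
    have hev := ht.eventually_lt_const hρ1
    obtain ⟨m, hm⟩ := (hev.and (Filter.eventually_ge_atTop 1)).exists
    refine ⟨m, hm.2, ?_⟩
    have h1 : ((‖C ^ m‖₊ : ENNReal)) < 1 := by
      by_contra hcon
      push_neg at hcon
      have h2 : (1 : ENNReal) ^ (1 / (m : ℝ)) ≤ (‖C ^ m‖₊ : ENNReal) ^ (1 / (m : ℝ)) :=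
        ENNReal.rpow_le_rpow hcon (by positivity)
      rw [ENNReal.one_rpow] at h2
      exact absurd hm.1 (not_lt.mpr h2)
    have h3 : ‖C ^ m‖₊ < 1 := by exact_mod_cast h1
    exact_mod_cast h3
  set E := (1 - C)⁻¹ with hEdef
  have h1spec : (1 : ℂ) ∉ spectrum ℂ C := by
    intro h
    have h2 := hspecC 1 h
    rw [mul_one, sub_self] at h2
    exact h0 h2
  have hunit : IsUnit (1 - C).det := by
    rw [isUnit_iff_ne_zero]
    intro hd
    exact h1spec (by rw [mem_spectrum_iff_det, one_smul]; exact hd)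
  have hE1 : (1 - C) * E = 1 := Matrix.mul_nonsing_inv _ hunit
  have hE2 : E * (1 - C) = 1 := Matrix.nonsing_inv_mul _ hunit
  have hSN : ∀ N : ℕ, (1 - C) * (∑ k ∈ Finset.range N, C ^ k) = 1 - C ^ N := by
    intro N
    induction N with
    | zero =>
      rw [Finset.range_zero, Finset.sum_empty, mul_zero, pow_zero, sub_self]
    | succ N ih =>
      rw [Finset.sum_range_succ, mul_add, ih]
      have hcc : (1 - C) * C ^ N = C ^ N - C ^ (N + 1) := by
        rw [sub_mul, one_mul, pow_succ']
      rw [hcc]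
      abel
  have hSE : ∀ N, (∑ k ∈ Finset.range N, C ^ k) = E - E * C ^ N := by
    intro N
    have h2 := congrArg (fun M => E * M) (hSN N)
    rw [← mul_assoc, hE2, one_mul] at h2
    rw [h2, mul_sub, mul_one]
  have htend : Filter.Tendsto (fun q : ℕ => ∑ k ∈ Finset.range (m * q), C ^ k)
      Filter.atTop (nhds E) := by
    have hD : Filter.Tendsto (fun q : ℕ => (C ^ m) ^ q) Filter.atTop (nhds 0) :=
      tendsto_pow_atTop_nhds_zero_of_norm_lt_one hmlt
    have h2 : Filter.Tendsto (fun q : ℕ => E - E * (C ^ m) ^ q) Filter.atTop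
        (nhds (E - E * 0)) :=
      Filter.Tendsto.sub tendsto_const_nhds (Filter.Tendsto.const_mul E hD)
    simp only [mul_zero, sub_zero] at h2
    convert h2 using 2 with q
    rw [hSE, pow_mul]
  intro i j
  have hEntry : Filter.Tendsto (fun q : ℕ => (∑ k ∈ Finset.range (m * q), C ^ k) i j)
      Filter.atTop (nhds (E i j)) := by
    rw [tendsto_iff_norm_sub_tendsto_zero]
    have hb : Filter.Tendsto (fun q : ℕ => ‖(∑ k ∈ Finset.range (m * q), C ^ k) - E‖)
        Filter.atTop (nhds 0) := by
      rw [← tendsto_iff_norm_sub_tendsto_zero]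
      exact htend
    refine squeeze_zero_norm (fun q => ?_) hb
    simpa [Matrix.sub_apply] using
      entry_norm_le ((∑ k ∈ Finset.range (m * q), C ^ k) - E) i j
  have hentval : ∀ q : ℕ, (∑ k ∈ Finset.range (m * q), C ^ k) i j =
      ((∑ k ∈ Finset.range (m * q), (Cr ^ k) i j : ℝ) : ℂ) := by
    intro q
    rw [Matrix.sum_apply]
    push_cast
    refine Finset.sum_congr rfl fun k _ => ?_
    rw [hC, map_ofReal_pow, Matrix.map_apply]
  have hEre : 0 ≤ (E i j).re := by
    have h2 : Filter.Tendsto (fun q : ℕ => ((∑ k ∈ Finset.range (m * q), C ^ k) i j).re)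
        Filter.atTop (nhds ((E i j).re)) :=
      (Complex.continuous_re.tendsto _).comp hEntry
    refine ge_of_tendsto h2 (Filter.Eventually.of_forall fun q => ?_)
    rw [hentval q, Complex.ofReal_re]
    exact Finset.sum_nonneg fun k _ => pow_entry_nonneg hCpos k i j
  have hAinv : Ac * ((-(s : ℂ)⁻¹) • E) = 1 := by
    rw [hAcC, smul_mul_assoc, mul_smul_comm, hE1, smul_smul]
    rw [show (-(s : ℂ)) * (-(s : ℂ)⁻¹) = 1 by field_simp]
    rw [one_smul]
  have hmap1 : A⁻¹.map Complex.ofReal = (-(s : ℂ)⁻¹) • E := by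
    have h2 : Ac * (A⁻¹.map Complex.ofReal) = 1 := by
      have h3 : Ac * A⁻¹.map Complex.ofReal = (A * A⁻¹).map Complex.ofReal :=
        (map_mul (Complex.ofRealHom.mapMatrix :
          Matrix (Fin n) (Fin n) ℝ →+* Matrix (Fin n) (Fin n) ℂ) A A⁻¹).symm
      rw [h3, Matrix.mul_nonsing_inv A hdet]
      exact Matrix.map_one _ Complex.ofReal_zero Complex.ofReal_one
    rw [← Matrix.inv_eq_right_inv h2, Matrix.inv_eq_right_inv hAinv]
  have hentry2 : ((A⁻¹ i j : ℝ) : ℂ) = (-(s : ℂ)⁻¹) * E i j := by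
    have h2 := congrFun (congrFun hmap1 i) j
    simpa [Matrix.map_apply, Matrix.smul_apply] using h2
  have hfinal : A⁻¹ i j = -(s⁻¹) * (E i j).re := by
    have h3 := congrArg Complex.re hentry2
    simp only [Complex.ofReal_re, Complex.mul_re, Complex.neg_re, Complex.neg_im,
      Complex.inv_re, Complex.inv_im, Complex.ofReal_im] at h3
    rw [h3]
    simp [Complex.normSq_ofReal]
  rw [hfinal]
  exact mul_nonpos_of_nonpos_of_nonneg (neg_nonpos.mpr (inv_nonneg.mpr hs0.le)) hEre

/-- The easy direction. -/
theorem backward (A : Matrix (Fin n) (Fin n) ℝ) (hM : IsMetzler A)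
    (hdet : IsUnit A.det) (hinv : ∀ i j, A⁻¹ i j ≤ 0) : IsHurwitz A := by
  intro μ hμ
  by_contra hre
  push_neg at hre
  set Ac := A.map Complex.ofReal with hAc
  rw [mem_spectrum_iff_det] at hμ
  obtain ⟨v, hv0, hv⟩ := Matrix.exists_mulVec_eq_zero_iff.mpr hμ
  have hvA : ∀ i, (Ac.mulVec v) i = μ * v i := by
    intro i
    have h2 := congrFun hv i
    simp only [Matrix.sub_mulVec, Matrix.smul_mulVec, Matrix.one_mulVec, Pi.sub_apply,
      Pi.smul_apply, smul_eq_mul, Pi.zero_apply] at h2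
    linear_combination -h2
  set s : ℝ := ∑ i, |A i i| with hs
  have hs0 : 0 ≤ s := Finset.sum_nonneg fun i _ => abs_nonneg _
  have hsd : ∀ i, 0 ≤ A i i + s := by
    intro i
    have h1 : |A i i| ≤ s := Finset.single_le_sum (f := fun i => |A i i|)
      (fun _ _ => abs_nonneg _) (Finset.mem_univ i)
    have := neg_abs_le (A i i)
    linarith
  set N : Matrix (Fin n) (Fin n) ℝ := A + s • 1 with hN
  have hNpos : ∀ i j, 0 ≤ N i j := by
    intro i j
    rcases eq_or_ne i j with rfl | hij
    · simp only [hN, Matrix.add_apply, Matrix.smul_apply, Matrix.one_apply_eq, smul_eq_mul,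
        mul_one]
      exact hsd i
    · simp only [hN, Matrix.add_apply, Matrix.smul_apply, Matrix.one_apply_ne hij, smul_eq_mul,
        mul_zero, add_zero]
      exact hM i j hij
  set w : Fin n → ℝ := fun i => ‖v i‖ with hw
  have hw0 : ∀ i, 0 ≤ w i := fun i => norm_nonneg _
  have key : ∀ i, ‖μ + s‖ * w i ≤ ∑ j, N i j * w j := by
    intro i
    have e2 : (Ac.mulVec v) i = ∑ j, ((A i j : ℝ) : ℂ) * v j := by
      simp [Matrix.mulVec, dotProduct, hAc, Matrix.map_apply]
    have e3 : μ * v i = ∑ j, ((A i j : ℝ) : ℂ) * v j := by rw [← e2, hvA]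
    have e1 : (μ + s) * v i = ∑ j, ((N i j : ℝ) : ℂ) * v j := by
      rw [add_mul, e3]
      have e4 : ∀ j, ((N i j : ℝ) : ℂ) * v j
          = ((A i j : ℝ) : ℂ) * v j + (if i = j then (s : ℂ) * v j else 0) := by
        intro j
        rcases eq_or_ne i j with rfl | hij
        · simp only [hN, Matrix.add_apply, Matrix.smul_apply, Matrix.one_apply_eq, smul_eq_mul,
            mul_one, if_pos rfl]
          push_cast
          ring
        · simp only [hN, Matrix.add_apply, Matrix.smul_apply, Matrix.one_apply_ne hij,
            smul_eq_mul, mul_zero, add_zero, if_neg hij]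
      rw [Finset.sum_congr rfl fun j _ => e4 j, Finset.sum_add_distrib,
        Finset.sum_ite_eq (Finset.univ) i (fun j => (s : ℂ) * v j)]
      simp
    calc ‖μ + s‖ * w i = ‖(μ + s) * v i‖ :=
          (norm_mul (μ + (s : ℂ)) (v i)).symm
      _ = ‖∑ j, ((N i j : ℝ) : ℂ) * v j‖ := by rw [e1]
      _ ≤ ∑ j, ‖((N i j : ℝ) : ℂ) * v j‖ :=
          norm_sum_le Finset.univ _
      _ = ∑ j, N i j * w j := Finset.sum_congr rfl fun j _ => by
          rw [norm_mul, Complex.norm_real, Real.norm_eq_abs, abs_of_nonneg (hNpos i j)]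
  have habs : s ≤ ‖μ + s‖ := by
    have h1 : (μ + (s : ℂ)).re ≤ ‖μ + s‖ := Complex.re_le_norm _
    have h2 : (μ + (s : ℂ)).re = μ.re + s := by simp
    linarith
  have hu : ∀ i, 0 ≤ A.mulVec w i := by
    intro i
    have h1 : s * w i ≤ ∑ j, N i j * w j :=
      le_trans (mul_le_mul_of_nonneg_right habs (hw0 i)) (key i)
    have h2 : ∑ j, N i j * w j = A.mulVec w i + s * w i := by
      have e4 : ∀ j, N i j * w j = A i j * w j + (if i = j then s * w j else 0) := by
        intro j
        rcases eq_or_ne i j with rfl | hij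
        · simp only [hN, Matrix.add_apply, Matrix.smul_apply, Matrix.one_apply_eq, smul_eq_mul,
            mul_one, eq_self_iff_true, if_true]
          ring
        · simp only [hN, Matrix.add_apply, Matrix.smul_apply, Matrix.one_apply_ne hij,
            smul_eq_mul, mul_zero, add_zero, if_neg hij]
      rw [Finset.sum_congr rfl fun j _ => e4 j, Finset.sum_add_distrib,
        Finset.sum_ite_eq Finset.univ i (fun j => s * w j), if_pos (Finset.mem_univ i)]
      simp [Matrix.mulVec, dotProduct]
    linarith
  obtain ⟨i0, hi0⟩ := Function.ne_iff.mp hv0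
  have hwpos : 0 < w i0 := norm_pos_iff.mpr hi0
  have hwid : A⁻¹.mulVec (A.mulVec w) = w := by
    rw [Matrix.mulVec_mulVec, Matrix.nonsing_inv_mul A hdet, Matrix.one_mulVec]
  have hcontra : w i0 ≤ 0 := by
    rw [← hwid]
    simp only [Matrix.mulVec, dotProduct]
    exact Finset.sum_nonpos fun j _ => mul_nonpos_of_nonpos_of_nonneg (hinv i0 j) (hu j)
  linarith

end MetzlerAux

/-- A Metzler matrix is Hurwitz stable iff it is nonsingular with entrywise
nonpositive inverse. -/
theorem metzler_hurwitz_iff_inv_nonpos {n : ℕ} (A : Matrix (Fin n) (Fin n) ℝ)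
    (hM : IsMetzler A) :
    IsHurwitz A ↔ (IsUnit A.det ∧ ∀ i j, A⁻¹ i j ≤ 0) := by
  constructor
  · exact fun hH => MetzlerAux.forward A hM hH
  · exact fun ⟨hdet, hinv⟩ => MetzlerAux.backward A hM hdet hinv
end

section
/- (Schur-complement stability for Metzler block matrices.) Let M = [[M₁₁, M₁₂],[M₂₁, M₂₂]] be a Metzler matrix where M₁₁, M₂₂ are square Metzler blocks and M₁₂, M₂₁ are entrywise nonnegative. Then M is Hurwitz stable if and only if M₁₁ is Hurwitz stable and M₂₂ − M₂₁ M₁₁⁻¹ M₁₂ is Hurwitz stable. -/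
set_option maxHeartbeats 1000000
set_option linter.unusedSectionVars false

open Matrix

def IsMetzler' {n : Type*} [Fintype n] [DecidableEq n] (A : Matrix n n ℝ) : Prop :=
  ∀ i j, i ≠ j → 0 ≤ A i j

def IsHurwitz' {n : Type*} [Fintype n] [DecidableEq n] (A : Matrix n n ℝ) : Prop :=
  ∀ μ ∈ spectrum ℂ (A.map (Complex.ofReal)), μ.re < 0

section Development

variable {n : Type*} [Fintype n] [DecidableEq n]

attribute [local instance] Matrix.linftyOpNormedAddCommGroup Matrix.linftyOpNormedRing
  Matrix.linftyOpNormedSpace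

local instance : CompleteSpace (Matrix n n ℝ) :=
  FiniteDimensional.complete ℝ (Matrix n n ℝ)

lemma entry_nnnorm_le (A : Matrix n n ℝ) (i j : n) : ‖A i j‖₊ ≤ ‖A‖₊ := by
  rw [Matrix.linfty_opNNNorm_def]
  exact le_trans (Finset.single_le_sum (f := fun j => ‖A i j‖₊)
    (fun _ _ => zero_le) (Finset.mem_univ j))
    (Finset.le_sup (f := fun i => ∑ j : n, ‖A i j‖₊) (Finset.mem_univ i))


/-- entry evaluation as a continuous additive map -/
lemma continuous_entry (i j : n) : Continuous fun A : Matrix n n ℝ => A i j := by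
  have : LipschitzWith 1 (fun A : Matrix n n ℝ => A i j) := by
    have := AddMonoidHomClass.lipschitz_of_bound
      (⟨⟨fun A : Matrix n n ℝ => A i j, rfl⟩, fun A B => rfl⟩ : Matrix n n ℝ →+ ℝ) 1
      (fun A => by show ‖A i j‖ ≤ 1 * ‖A‖; rw [one_mul]; exact_mod_cast entry_nnnorm_le A i j)
    have h := this; simp at h; exact h
  exact this.continuous

lemma mul_entry_nonneg {A B : Matrix n n ℝ} (hA : ∀ i j, 0 ≤ A i j)
    (hB : ∀ i j, 0 ≤ B i j) : ∀ i j, 0 ≤ (A * B) i j := by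
  intro i j
  rw [Matrix.mul_apply]
  exact Finset.sum_nonneg fun k _ => mul_nonneg (hA i k) (hB k j)

lemma pow_entry_nonneg {A : Matrix n n ℝ} (hA : ∀ i j, 0 ≤ A i j) (k : ℕ) :
    ∀ i j, 0 ≤ (A ^ k) i j := by
  induction k with
  | zero => intro i j; simp [Matrix.one_apply]; positivity
  | succ k ih => rw [pow_succ]; exact mul_entry_nonneg ih hA

/-- Neumann series positivity -/
lemma neumann_nonneg {x : Matrix n n ℝ} (hx : ∀ i j, 0 ≤ x i j) (hn : ‖x‖ < 1) :
    ∀ i j, 0 ≤ Ring.inverse (1 - x) i j := by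
  intro i j
  have hs : HasSum (fun k : ℕ => x ^ k) (Ring.inverse (1 - x)) :=
    hasSum_geom_series_inverse x hn
  have hs' : HasSum (fun k : ℕ => (x ^ k) i j) (Ring.inverse (1 - x) i j) := by
    exact hs.map (⟨⟨fun A : Matrix n n ℝ => A i j, rfl⟩, fun A B => rfl⟩ : Matrix n n ℝ →+ ℝ)
      (continuous_entry i j)
  exact hasSum_le (fun k => pow_entry_nonneg hx k i j) hasSum_zero hs'


lemma map_smul_one_sub (A : Matrix n n ℝ) (t : ℝ) :
    (t • (1 : Matrix n n ℝ) - A).map (Complex.ofReal) =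
      (t : ℂ) • (1 : Matrix n n ℂ) - A.map (Complex.ofReal) := by
  ext i j
  by_cases h : i = j <;>
    simp [Matrix.map_apply, Matrix.one_apply, h]

lemma isUnit_smul_one_sub {A : Matrix n n ℝ} (hH : IsHurwitz' A) {t : ℝ} (ht : 0 ≤ t) :
    IsUnit (t • (1 : Matrix n n ℝ) - A) := by
  by_contra h
  have hdet : (t • (1 : Matrix n n ℝ) - A).det = 0 := by
    by_contra hd
    exact h ((Matrix.isUnit_iff_isUnit_det _).2 (isUnit_iff_ne_zero.2 hd))
  have hdetC : ((t : ℂ) • (1 : Matrix n n ℂ) - A.map (Complex.ofReal)).det = 0 := by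
    rw [← map_smul_one_sub]
    have : (t • (1 : Matrix n n ℝ) - A).map (Complex.ofReal) =
        Complex.ofRealHom.mapMatrix (t • (1 : Matrix n n ℝ) - A) := rfl
    rw [this, ← RingHom.map_det Complex.ofRealHom]
    simp [hdet]
  have hmem : (t : ℂ) ∈ spectrum ℂ (A.map (Complex.ofReal)) := by
    rw [spectrum.mem_iff]
    intro hu
    rw [Algebra.algebraMap_eq_smul_one] at hu
    rw [Matrix.isUnit_iff_isUnit_det] at hu
    rw [hdetC] at hu
    simp at hu
  have := hH _ hmem
  simp at this
  linarith

section Resolvent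

variable {A : Matrix n n ℝ}

lemma smul_one_sub_eq (A : Matrix n n ℝ) (s t : ℝ) :
    t • (1 : Matrix n n ℝ) - A = (t + s) • (1 : Matrix n n ℝ) - (A + s • 1) := by
  rw [add_smul]; abel

/-- base case: for `t ≥ ‖B‖` (suitably shifted) the resolvent is entrywise nonneg -/
lemma resolvent_nonneg_base (hM : IsMetzler' A) {t : ℝ}
    (ht : ‖A + (1 + ∑ i, |A i i|) • (1 : Matrix n n ℝ)‖ ≤ t) :
    ∀ i j, 0 ≤ (t • (1 : Matrix n n ℝ) - A)⁻¹ i j := by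
  set s : ℝ := 1 + ∑ i, |A i i| with hs
  set B : Matrix n n ℝ := A + s • 1 with hBdef
  have hspos : 0 < s := by
    have : (0:ℝ) ≤ ∑ i, |A i i| := Finset.sum_nonneg fun i _ => abs_nonneg _
    linarith
  have hB : ∀ i j, 0 ≤ B i j := by
    intro i j
    by_cases h : i = j
    · subst h
      have h1 : |A i i| ≤ ∑ k, |A k k| :=
        Finset.single_le_sum (f := fun k => |A k k|) (fun _ _ => abs_nonneg _)
          (Finset.mem_univ i)
      have h2 : -A i i ≤ |A i i| := neg_le_abs _
      simp only [hBdef, Matrix.add_apply, Matrix.smul_apply, Matrix.one_apply_eq, smul_eq_mul,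
        mul_one]
      linarith
    · simp only [hBdef, Matrix.add_apply, Matrix.smul_apply, Matrix.one_apply_ne h, smul_eq_mul,
        mul_zero, add_zero]
      exact hM i j h
  set u : ℝ := t + s with hu
  have hBnorm : ‖B‖ < u := by
    have : (0:ℝ) ≤ ‖B‖ := norm_nonneg _
    simp only [hu]; linarith
  have hupos : 0 < u := lt_of_le_of_lt (norm_nonneg _) hBnorm
  set x : Matrix n n ℝ := u⁻¹ • B with hx
  have hxe : ∀ i j, 0 ≤ x i j := fun i j => by
    simpa [hx] using mul_nonneg (inv_nonneg.2 hupos.le) (hB i j)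
  have hxn : ‖x‖ < 1 := by
    rw [hx, norm_smul, norm_inv, Real.norm_eq_abs, abs_of_pos hupos]
    rw [inv_mul_lt_iff₀ hupos, mul_one]
    exact hBnorm
  have key : t • (1 : Matrix n n ℝ) - A = u • ((1 : Matrix n n ℝ) - x) := by
    rw [smul_sub, hx, smul_smul, mul_inv_cancel₀ (ne_of_gt hupos), one_smul]
    exact smul_one_sub_eq A s t
  have hW : (1 - x) * Ring.inverse (1 - x) = 1 :=
    Ring.mul_inverse_cancel _ (isUnit_one_sub_of_norm_lt_one hxn)
  have hinv : (t • (1 : Matrix n n ℝ) - A)⁻¹ = u⁻¹ • Ring.inverse (1 - x) := by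
    apply Matrix.inv_eq_right_inv
    rw [key, Matrix.smul_mul, Matrix.mul_smul, smul_smul, mul_inv_cancel₀ (ne_of_gt hupos), hW,
      one_smul]
  intro i j
  rw [hinv]
  have := neumann_nonneg hxe hxn i j
  simpa using mul_nonneg (inv_nonneg.2 hupos.le) this

end Resolvent

section Resolvent2

variable {A : Matrix n n ℝ}

lemma resolvent_step (hH : IsHurwitz' A) {c δ : ℝ} (hc : 0 ≤ c) (hδpos : 0 < δ)
    (hδn : δ * ‖(c • (1 : Matrix n n ℝ) - A)⁻¹‖ < 1)
    (hR : ∀ i j, 0 ≤ (c • (1 : Matrix n n ℝ) - A)⁻¹ i j) :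
    ∀ i j, 0 ≤ ((c - δ) • (1 : Matrix n n ℝ) - A)⁻¹ i j := by
  set X : Matrix n n ℝ := c • (1 : Matrix n n ℝ) - A with hX
  have hXu : IsUnit X := isUnit_smul_one_sub hH hc
  have hXdet : IsUnit X.det := (Matrix.isUnit_iff_isUnit_det _).1 hXu
  set y : Matrix n n ℝ := δ • X⁻¹ with hy
  have hye : ∀ i j, 0 ≤ y i j := fun i j => by
    simpa [hy] using mul_nonneg hδpos.le (hR i j)
  have hyn : ‖y‖ < 1 := by
    rw [hy, norm_smul, Real.norm_eq_abs, abs_of_pos hδpos]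
    exact hδn
  have key : (c - δ) • (1 : Matrix n n ℝ) - A = X * (1 - y) := by
    rw [Matrix.mul_sub, mul_one, hy, Matrix.mul_smul, Matrix.mul_nonsing_inv _ hXdet, sub_smul,
      hX]
    abel
  have hW : (1 - y) * Ring.inverse (1 - y) = 1 :=
    Ring.mul_inverse_cancel _ (isUnit_one_sub_of_norm_lt_one hyn)
  have hinv : ((c - δ) • (1 : Matrix n n ℝ) - A)⁻¹ = Ring.inverse (1 - y) * X⁻¹ := by
    apply Matrix.inv_eq_right_inv
    rw [key]
    calc (X * (1 - y)) * (Ring.inverse (1 - y) * X⁻¹)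
        = X * ((1 - y) * Ring.inverse (1 - y)) * X⁻¹ := by
          noncomm_ring
      _ = 1 := by rw [hW, mul_one, Matrix.mul_nonsing_inv _ hXdet]
  rw [hinv]
  exact mul_entry_nonneg (neumann_nonneg hye hyn) hR

lemma resolvent_continuousAt (hH : IsHurwitz' A) {c : ℝ} (hc : 0 ≤ c) (i j : n) :
    ContinuousAt (fun t : ℝ => (t • (1 : Matrix n n ℝ) - A)⁻¹ i j) c := by
  have heq : (fun t : ℝ => (t • (1 : Matrix n n ℝ) - A)⁻¹ i j) =
      (fun t : ℝ => (Ring.inverse (t • (1 : Matrix n n ℝ) - A)) i j) := by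
    funext t
    rw [Matrix.nonsing_inv_eq_ringInverse]
  rw [heq]
  have h1 : Continuous (fun t : ℝ => t • (1 : Matrix n n ℝ) - A) :=
    (continuous_id.smul continuous_const).sub continuous_const
  have hu := isUnit_smul_one_sub hH hc
  have h2 : ContinuousAt Ring.inverse (c • (1 : Matrix n n ℝ) - A) := by
    have := NormedRing.inverse_continuousAt hu.unit
    rwa [IsUnit.unit_spec] at this
  exact (continuous_entry i j).continuousAt.comp
    (h2.comp (f := fun t : ℝ => t • (1 : Matrix n n ℝ) - A) h1.continuousAt)

end Resolvent2

section Resolvent3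

variable {A : Matrix n n ℝ}

lemma resolvent_nonneg (hM : IsMetzler' A) (hH : IsHurwitz' A) :
    ∀ t : ℝ, 0 ≤ t → ∀ i j, 0 ≤ (t • (1 : Matrix n n ℝ) - A)⁻¹ i j := by
  set T : ℝ := max 0 ‖A + (1 + ∑ i, |A i i|) • (1 : Matrix n n ℝ)‖ with hT
  have hTbase : ∀ t, T ≤ t → ∀ i j, 0 ≤ (t • (1 : Matrix n n ℝ) - A)⁻¹ i j :=
    fun t ht => resolvent_nonneg_base hM (le_trans (le_max_right _ _) ht)
  have hT0 : 0 ≤ T := le_max_left _ _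
  set F : Set ℝ :=
    {t | 0 ≤ t ∧ ∀ t', t ≤ t' → t' ≤ T → ∀ i j, 0 ≤ (t' • (1 : Matrix n n ℝ) - A)⁻¹ i j}
    with hF
  have hTF : T ∈ F := ⟨hT0, fun t' h1 _ => hTbase t' h1⟩
  have hFne : F.Nonempty := ⟨T, hTF⟩
  have hFbdd : BddBelow F := ⟨0, fun x hx => hx.1⟩
  set c : ℝ := sInf F with hc
  have hc0 : 0 ≤ c := le_csInf hFne fun x hx => hx.1
  have hcT : c ≤ T := csInf_le hFbdd hTF
  have hlater : ∀ t', c < t' → t' ≤ T → ∀ i j, 0 ≤ (t' • (1 : Matrix n n ℝ) - A)⁻¹ i j := by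
    intro t' hlt h2 i j
    obtain ⟨f, hfF, hflt⟩ := exists_lt_of_csInf_lt hFne hlt
    exact hfF.2 t' hflt.le h2 i j
  have hcF : c ∈ F := by
    refine ⟨hc0, ?_⟩
    intro t' h1 h2 i j
    rcases eq_or_lt_of_le h1 with heq | hlt
    · rw [← heq]
      rcases eq_or_lt_of_le hcT with heqT | hltT
      · exact hTbase c heqT.ge i j
      · have htd : Filter.Tendsto (fun t : ℝ => (t • (1 : Matrix n n ℝ) - A)⁻¹ i j)
            (nhdsWithin c (Set.Ioi c)) (nhds ((c • (1 : Matrix n n ℝ) - A)⁻¹ i j)) :=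
          (resolvent_continuousAt hH hc0 i j).continuousWithinAt
        refine ge_of_tendsto htd ?_
        filter_upwards [Ioc_mem_nhdsGT_of_mem ⟨le_refl c, hltT⟩] with u hu
        exact hlater u hu.1 hu.2 i j
    · exact hlater t' hlt h2 i j
  have hc_eq : c = 0 := by
    by_contra hne
    have hcpos : 0 < c := lt_of_le_of_ne hc0 (Ne.symm hne)
    set K : ℝ := ‖(c • (1 : Matrix n n ℝ) - A)⁻¹‖ with hK
    have hKnn : 0 ≤ K := norm_nonneg _
    set δ : ℝ := min c (1 / (2 * (K + 1))) with hδ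
    have hδpos : 0 < δ := lt_min hcpos (by positivity)
    have hδc : δ ≤ c := min_le_left _ _
    have hRc : ∀ i j, 0 ≤ (c • (1 : Matrix n n ℝ) - A)⁻¹ i j := hcF.2 c le_rfl hcT
    have hstep : ∀ δ', 0 < δ' → δ' ≤ δ →
        ∀ i j, 0 ≤ ((c - δ') • (1 : Matrix n n ℝ) - A)⁻¹ i j := by
      intro δ' h1 h2
      apply resolvent_step hH hc0 h1 _ hRc
      have h3 : δ' ≤ 1 / (2 * (K + 1)) := h2.trans (min_le_right _ _)
      calc δ' * K ≤ (1 / (2 * (K + 1))) * K := mul_le_mul_of_nonneg_right h3 hKnn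
        _ < 1 := by
            rw [div_mul_eq_mul_div, one_mul, div_lt_one (by positivity)]
            nlinarith
    have hmem : c - δ ∈ F := by
      refine ⟨by linarith, ?_⟩
      intro t' h1 h2 i j
      rcases le_or_gt c t' with h | h
      · exact hcF.2 t' h h2 i j
      · have h4 : t' = c - (c - t') := by ring
        rw [h4]
        exact hstep (c - t') (by linarith) (by linarith) i j
    have : c ≤ c - δ := csInf_le hFbdd hmem
    linarith
  have h0F : (0 : ℝ) ∈ F := hc_eq ▸ hcF
  intro t ht i j
  rcases le_or_gt T t with h | h
  · exact hTbase t h i j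
  · exact h0F.2 t ht h.le i j

end Resolvent3

section InvNonpos

variable {A : Matrix n n ℝ}

lemma hurwitz_isUnit_det (hH : IsHurwitz' A) : IsUnit A.det := by
  have hu : IsUnit ((0 : ℝ) • (1 : Matrix n n ℝ) - A) := isUnit_smul_one_sub hH le_rfl
  rw [zero_smul, zero_sub] at hu
  have : IsUnit A := by
    have := hu.neg
    rwa [neg_neg] at this
  exact (Matrix.isUnit_iff_isUnit_det _).1 this

lemma hurwitz_inv_nonpos (hM : IsMetzler' A) (hH : IsHurwitz' A) :
    ∀ i j, A⁻¹ i j ≤ 0 := by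
  have hu : IsUnit ((0 : ℝ) • (1 : Matrix n n ℝ) - A) := isUnit_smul_one_sub hH le_rfl
  have hdet : IsUnit ((0 : ℝ) • (1 : Matrix n n ℝ) - A).det :=
    (Matrix.isUnit_iff_isUnit_det _).1 hu
  have hinv : A⁻¹ = -(((0 : ℝ) • (1 : Matrix n n ℝ) - A)⁻¹) := by
    apply Matrix.inv_eq_right_inv
    rw [Matrix.mul_neg, ← Matrix.neg_mul]
    have h0 : (-A) = (0 : ℝ) • (1 : Matrix n n ℝ) - A := by rw [zero_smul, zero_sub]
    rw [h0, Matrix.mul_nonsing_inv _ hdet]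
  intro i j
  rw [hinv]
  have := resolvent_nonneg hM hH 0 le_rfl i j
  simp only [Matrix.neg_apply]
  linarith

lemma hurwitz_exists_pos_vec (hM : IsMetzler' A) (hH : IsHurwitz' A) :
    ∃ v : n → ℝ, (∀ i, 0 < v i) ∧ ∀ i, (A.mulVec v) i < 0 := by
  have hdet : IsUnit A.det := hurwitz_isUnit_det hH
  have hinvle : ∀ i j, A⁻¹ i j ≤ 0 := hurwitz_inv_nonpos hM hH
  set v : n → ℝ := (-A⁻¹).mulVec (fun _ => 1) with hv
  have hv0 : ∀ i, 0 ≤ v i := by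
    intro i
    simp only [hv, Matrix.mulVec, dotProduct, Matrix.neg_apply, mul_one]
    exact Finset.sum_nonneg fun j _ => by linarith [hinvle i j]
  have hAv : A.mulVec v = fun _ => (-1 : ℝ) := by
    rw [hv, Matrix.mulVec_mulVec, Matrix.mul_neg, Matrix.mul_nonsing_inv _ hdet]
    funext i
    simp [Matrix.neg_mulVec, Matrix.mulVec_one]
  have hvpos : ∀ i, 0 < v i := by
    intro i
    rcases lt_or_eq_of_le (hv0 i) with h | h
    · exact h
    · exfalso
      have hAvi : (A.mulVec v) i = -1 := by rw [hAv]
      have : (0:ℝ) ≤ (A.mulVec v) i := by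
        simp only [Matrix.mulVec, dotProduct]
        apply Finset.sum_nonneg
        intro j _
        by_cases hj : j = i
        · subst hj; rw [← h]; simp
        · exact mul_nonneg (hM i j (Ne.symm hj)) (hv0 j)
      rw [hAvi] at this; linarith
  exact ⟨v, hvpos, fun i => by rw [hAv]; norm_num⟩

end InvNonpos

section PosVecHurwitz

variable {A : Matrix n n ℝ}

lemma pos_vec_hurwitz (hM : IsMetzler' A) {v : n → ℝ} (hv : ∀ i, 0 < v i)
    (hAv : ∀ i, (A.mulVec v) i < 0) : IsHurwitz' A := by
  intro μ hμ
  rw [spectrum.mem_iff] at hμ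
  have hdet : ((μ • (1 : Matrix n n ℂ)) - A.map Complex.ofReal).det = 0 := by
    by_contra h
    apply hμ
    rw [Algebra.algebraMap_eq_smul_one]
    exact (Matrix.isUnit_iff_isUnit_det _).2 (isUnit_iff_ne_zero.2 h)
  obtain ⟨z, hz0, hz⟩ := (Matrix.exists_mulVec_eq_zero_iff).2 hdet
  have heig : ∀ i, ∑ k, (A i k : ℂ) * z k = μ * z i := by
    intro i
    have := congrFun hz i
    rw [Matrix.sub_mulVec] at this
    have h1 : ((μ • (1 : Matrix n n ℂ)).mulVec z) i = μ * z i := by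
      rw [Matrix.smul_mulVec, Matrix.one_mulVec]; rfl
    have h2 : ((A.map Complex.ofReal).mulVec z) i = ∑ k, (A i k : ℂ) * z k := by
      simp [Matrix.mulVec, dotProduct, Matrix.map_apply]
    have h3 : ((μ • (1 : Matrix n n ℂ)).mulVec z) i - ((A.map Complex.ofReal).mulVec z) i = 0 := by
      simpa using this
    rw [h1, h2] at h3
    linear_combination -h3
  obtain ⟨j0, hj0⟩ : ∃ j, z j ≠ 0 := by
    by_contra h
    push_neg at h
    exact hz0 (funext h)
  obtain ⟨i, -, hi⟩ := Finset.exists_max_image Finset.univ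
    (fun k => ‖z k‖ / v k) ⟨j0, Finset.mem_univ j0⟩
  set t : ℝ := ‖z i‖ / v i with ht
  have htpos : 0 < t :=
    lt_of_lt_of_le (div_pos (norm_pos_iff.2 hj0) (hv j0)) (hi j0 (Finset.mem_univ j0))
  have hzle : ∀ k, ‖z k‖ ≤ t * v k := by
    intro k
    have hk := hi k (Finset.mem_univ k)
    rw [div_le_iff₀ (hv k)] at hk
    linarith [hk]
  have hzi : ‖z i‖ = t * v i := by
    rw [ht, div_mul_cancel₀]
    exact ne_of_gt (hv i)
  have hsplit : (μ - (A i i : ℂ)) * z i = ∑ k ∈ Finset.univ.erase i, (A i k : ℂ) * z k := by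
    have h4 := heig i
    rw [← Finset.add_sum_erase _ _ (Finset.mem_univ i)] at h4
    linear_combination -h4
  have hAvi : (A.mulVec v) i = ∑ k, A i k * v k := by
    simp [Matrix.mulVec, dotProduct]
  have hsum : ∑ k ∈ Finset.univ.erase i, A i k * v k = (A.mulVec v) i - A i i * v i := by
    rw [hAvi, ← Finset.add_sum_erase _ (fun k => A i k * v k) (Finset.mem_univ i)]
    ring
  have habs : ‖μ - (A i i : ℂ)‖ * (t * v i) ≤ t * ((A.mulVec v) i - A i i * v i) := by
    rw [← hzi, ← norm_mul, hsplit]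
    refine le_trans (norm_sum_le _ _) ?_
    rw [← hsum, Finset.mul_sum]
    refine Finset.sum_le_sum ?_
    intro k hk
    have hAik : 0 ≤ A i k := hM i k (Finset.ne_of_mem_erase hk).symm
    rw [norm_mul, Complex.norm_real, Real.norm_eq_abs, abs_of_nonneg hAik]
    calc A i k * ‖z k‖ ≤ A i k * (t * v k) := mul_le_mul_of_nonneg_left (hzle k) hAik
      _ = t * (A i k * v k) := by ring
  have hlt : ‖μ - (A i i : ℂ)‖ < -(A i i) := by
    have h6 : t * ((A.mulVec v) i - A i i * v i) < t * (-(A i i) * v i) := by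
      apply mul_lt_mul_of_pos_left _ htpos
      have := hAv i
      nlinarith
    have h8 : 0 < t * v i := mul_pos htpos (hv i)
    have h7 : ‖μ - (A i i : ℂ)‖ * (t * v i) < (-(A i i)) * (t * v i) := by
      calc ‖μ - (A i i : ℂ)‖ * (t * v i) ≤ t * ((A.mulVec v) i - A i i * v i) := habs
        _ < t * (-(A i i) * v i) := h6
        _ = (-(A i i)) * (t * v i) := by ring
    exact lt_of_mul_lt_mul_right (by linarith [h7]) h8.le
  have h9 : μ.re - A i i ≤ ‖μ - (A i i : ℂ)‖ := by
    have h10 := Complex.re_le_norm (μ - (A i i : ℂ))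
    simpa using h10
  linarith

end PosVecHurwitz

section Helpers

variable {l o : Type*} [Fintype l] [Fintype o]

lemma rmul_entry_nonneg {p : Type*} [Fintype p] {P : Matrix l o ℝ} {Q : Matrix o p ℝ}
    (hP : ∀ i j, 0 ≤ P i j)
    (hQ : ∀ i j, 0 ≤ Q i j) : ∀ i j, 0 ≤ (P * Q) i j := fun i j =>
  Finset.sum_nonneg fun k _ => mul_nonneg (hP i k) (hQ k j)

lemma rmul_entry_nonpos {p : Type*} [Fintype p] {P : Matrix l o ℝ} {Q : Matrix o p ℝ}
    (hP : ∀ i j, 0 ≤ P i j)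
    (hQ : ∀ i j, Q i j ≤ 0) : ∀ i j, (P * Q) i j ≤ 0 := fun i j =>
  Finset.sum_nonpos fun k _ => mul_nonpos_of_nonneg_of_nonpos (hP i k) (hQ k j)

lemma lmul_entry_nonpos {p : Type*} [Fintype p] {P : Matrix l o ℝ} {Q : Matrix o p ℝ}
    (hP : ∀ i j, P i j ≤ 0)
    (hQ : ∀ i j, 0 ≤ Q i j) : ∀ i j, (P * Q) i j ≤ 0 := fun i j =>
  Finset.sum_nonpos fun k _ => mul_nonpos_of_nonpos_of_nonneg (hP i k) (hQ k j)

lemma mulVec_nonneg {P : Matrix l o ℝ} (hP : ∀ i j, 0 ≤ P i j) {x : o → ℝ}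
    (hx : ∀ j, 0 ≤ x j) : ∀ i, 0 ≤ (P.mulVec x) i := fun i =>
  Finset.sum_nonneg fun k _ => mul_nonneg (hP i k) (hx k)

lemma mulVec_mono {P : Matrix l o ℝ} (hP : ∀ i j, 0 ≤ P i j) {x y : o → ℝ}
    (hxy : ∀ j, x j ≤ y j) : ∀ i, (P.mulVec x) i ≤ (P.mulVec y) i := fun i =>
  Finset.sum_le_sum fun k _ => mul_le_mul_of_nonneg_left (hxy k) (hP i k)

lemma exists_eps (c d : l → ℝ) (hd : ∀ i, 0 < d i) :
    ∃ ε : ℝ, 0 < ε ∧ ∀ i, ε * c i < d i := by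
  rcases isEmpty_or_nonempty l with h | h
  · exact ⟨1, one_pos, fun i => isEmptyElim i⟩
  · set f : l → ℝ := fun i => d i / (|c i| + 1) with hf
    have hfpos : ∀ i, 0 < f i := fun i => div_pos (hd i) (by positivity)
    set ε : ℝ := Finset.univ.inf' Finset.univ_nonempty f with hε
    have hεpos : 0 < ε := by
      rw [hε, Finset.lt_inf'_iff]
      exact fun i _ => hfpos i
    refine ⟨ε, hεpos, fun i => ?_⟩
    have h1 : ε ≤ f i := Finset.inf'_le _ (Finset.mem_univ i)
    have h2 : ε * c i ≤ ε * |c i| := mul_le_mul_of_nonneg_left (le_abs_self _) hεpos.le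
    have h3 : ε * |c i| ≤ f i * |c i| := mul_le_mul_of_nonneg_right h1 (abs_nonneg _)
    have h4 : f i * |c i| < d i := by
      rw [hf, div_mul_eq_mul_div, div_lt_iff₀ (by positivity)]
      nlinarith [hd i, abs_nonneg (c i)]
    linarith

end Helpers


end Development

/-- Schur-complement characterization of Hurwitz stability for Metzler block
matrices: `[[M₁₁,M₁₂],[M₂₁,M₂₂]]` with Metzler diagonal blocks and nonnegative
off-diagonal blocks is Hurwitz stable iff `M₁₁` and the Schur complement
`M₂₂ - M₂₁ M₁₁⁻¹ M₁₂` are Hurwitz stable. -/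
theorem metzler_schur_complement {n m : ℕ}
    (M11 : Matrix (Fin n) (Fin n) ℝ) (M12 : Matrix (Fin n) (Fin m) ℝ)
    (M21 : Matrix (Fin m) (Fin n) ℝ) (M22 : Matrix (Fin m) (Fin m) ℝ)
    (h11 : IsMetzler' M11) (h22 : IsMetzler' M22)
    (h12 : ∀ i j, 0 ≤ M12 i j) (h21 : ∀ i j, 0 ≤ M21 i j) :
    IsHurwitz' (Matrix.fromBlocks M11 M12 M21 M22) ↔
      (IsHurwitz' M11 ∧ IsHurwitz' (M22 - M21 * M11⁻¹ * M12)) := by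
  have hMetz : IsMetzler' (Matrix.fromBlocks M11 M12 M21 M22) := by
    rintro (i | i) (j | j) hij <;>
      simp only [Matrix.fromBlocks_apply₁₁, Matrix.fromBlocks_apply₁₂,
        Matrix.fromBlocks_apply₂₁, Matrix.fromBlocks_apply₂₂]
    · exact h11 i j (fun h => hij (by rw [h]))
    · exact h12 i j
    · exact h21 i j
    · exact h22 i j (fun h => hij (by rw [h]))
  have hSmetz : ∀ (_ : ∀ i j, M11⁻¹ i j ≤ 0), IsMetzler' (M22 - M21 * M11⁻¹ * M12) := by
    intro hinv i j hij
    have hq : (M21 * M11⁻¹ * M12) i j ≤ 0 := by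
      rw [Matrix.mul_assoc]
      exact rmul_entry_nonpos h21 (lmul_entry_nonpos hinv h12) i j
    have := h22 i j hij
    simp only [Matrix.sub_apply]
    linarith
  constructor
  · intro hHM
    obtain ⟨v, hvpos, hAv⟩ := hurwitz_exists_pos_vec hMetz hHM
    set v1 : Fin n → ℝ := v ∘ Sum.inl with hv1def
    set v2 : Fin m → ℝ := v ∘ Sum.inr with hv2def
    have hvelim : v = Sum.elim v1 v2 := (Sum.elim_comp_inl_inr v).symm
    have hmv : (Matrix.fromBlocks M11 M12 M21 M22).mulVec v =
        Sum.elim (M11.mulVec v1 + M12.mulVec v2) (M21.mulVec v1 + M22.mulVec v2) := by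
      rw [hvelim, Matrix.fromBlocks_mulVec]
      simp
    have htop : ∀ i, (M11.mulVec v1) i + (M12.mulVec v2) i < 0 := by
      intro i
      have := hAv (Sum.inl i)
      rw [hmv] at this
      simpa using this
    have hbot : ∀ i, (M21.mulVec v1) i + (M22.mulVec v2) i < 0 := by
      intro i
      have := hAv (Sum.inr i)
      rw [hmv] at this
      simpa using this
    have hv1pos : ∀ i, 0 < v1 i := fun i => hvpos (Sum.inl i)
    have hv2pos : ∀ i, 0 < v2 i := fun i => hvpos (Sum.inr i)
    have h12v : ∀ i, 0 ≤ (M12.mulVec v2) i := mulVec_nonneg h12 fun j => (hv2pos j).le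
    have hM11v : ∀ i, (M11.mulVec v1) i < 0 := fun i =>
      lt_of_le_of_lt (by linarith [h12v i]) (htop i)
    have hH11 : IsHurwitz' M11 := pos_vec_hurwitz h11 hv1pos hM11v
    have hinv : ∀ i j, M11⁻¹ i j ≤ 0 := hurwitz_inv_nonpos h11 hH11
    have hdet11 : IsUnit M11.det := hurwitz_isUnit_det hH11
    refine ⟨hH11, ?_⟩
    set w : Fin n → ℝ := M12.mulVec v2 with hw
    have hwle : ∀ i, w i ≤ -((M11.mulVec v1) i) := fun i => by linarith [htop i]
    have hmono : ∀ j, ((-(M11⁻¹)).mulVec w) j ≤ ((-(M11⁻¹)).mulVec (-(M11.mulVec v1))) j :=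
      mulVec_mono (fun a b => by simpa using hinv a b) hwle
    have hident : (-(M11⁻¹)).mulVec (-(M11.mulVec v1)) = v1 := by
      rw [Matrix.neg_mulVec, Matrix.mulVec_neg, neg_neg, Matrix.mulVec_mulVec,
        Matrix.nonsing_inv_mul _ hdet11, Matrix.one_mulVec]
    have hSv : ∀ i, ((M22 - M21 * M11⁻¹ * M12).mulVec v2) i < 0 := by
      intro i
      have hexp : (M22 - M21 * M11⁻¹ * M12).mulVec v2 =
          M22.mulVec v2 + M21.mulVec ((-(M11⁻¹)).mulVec w) := by
        have h6 : (-(M11⁻¹)).mulVec w = -((M11⁻¹ * M12).mulVec v2) := by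
          rw [Matrix.neg_mulVec, hw, Matrix.mulVec_mulVec]
        rw [Matrix.sub_mulVec, h6, Matrix.mulVec_neg, Matrix.mulVec_mulVec,
          ← Matrix.mul_assoc, sub_eq_add_neg]
      rw [hexp]
      have h5 : (M21.mulVec ((-(M11⁻¹)).mulVec w)) i ≤ (M21.mulVec v1) i := by
        have := mulVec_mono h21 (fun j => le_trans (hmono j) (le_of_eq (congrFun hident j))) i
        simpa using this
      have := hbot i
      simp only [Pi.add_apply]
      linarith
    exact pos_vec_hurwitz (hSmetz hinv) hv2pos hSv
  · rintro ⟨hH11, hHS⟩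
    have hinv : ∀ i j, M11⁻¹ i j ≤ 0 := hurwitz_inv_nonpos h11 hH11
    have hdet11 : IsUnit M11.det := hurwitz_isUnit_det hH11
    obtain ⟨v1, hv1pos, hv1⟩ := hurwitz_exists_pos_vec h11 hH11
    obtain ⟨v2, hv2pos, hv2⟩ := hurwitz_exists_pos_vec (hSmetz hinv) hHS
    set w : Fin n → ℝ := M12.mulVec v2 with hw
    have hwpos : ∀ i, 0 ≤ w i := mulVec_nonneg h12 fun j => (hv2pos j).le
    set u0 : Fin n → ℝ := (-(M11⁻¹)).mulVec w with hu0def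
    have hu0 : ∀ i, 0 ≤ u0 i :=
      mulVec_nonneg (fun a b => by simpa using hinv a b) hwpos
    obtain ⟨ε, hεpos, hεlt⟩ := exists_eps (M21.mulVec v1)
      (fun i => -((M22 - M21 * M11⁻¹ * M12).mulVec v2) i) (fun i => by linarith [hv2 i])
    set u1 : Fin n → ℝ := fun i => u0 i + ε * v1 i with hu1def
    have hu1pos : ∀ i, 0 < u1 i := fun i => by
      have := hu0 i
      have := mul_pos hεpos (hv1pos i)
      simp only [hu1def]
      linarith
    have hM11u0 : M11.mulVec u0 = -w := by
      rw [hu0def, Matrix.neg_mulVec, Matrix.mulVec_neg, Matrix.mulVec_mulVec,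
        Matrix.mul_nonsing_inv _ hdet11, Matrix.one_mulVec]
    have hM11u1 : ∀ i, (M11.mulVec u1) i = -(w i) + ε * (M11.mulVec v1) i := by
      intro i
      have hsplit : u1 = u0 + ε • v1 := by
        funext j; simp [hu1def]
      rw [hsplit, Matrix.mulVec_add, Matrix.mulVec_smul, hM11u0]
      simp
    have hM21u0 : M21.mulVec u0 = -((M21 * M11⁻¹ * M12).mulVec v2) := by
      rw [hu0def, Matrix.neg_mulVec, Matrix.mulVec_neg, Matrix.mulVec_mulVec, hw,
        Matrix.mulVec_mulVec]
    have hM21u1 : ∀ i, (M21.mulVec u1) i =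
        -(((M21 * M11⁻¹ * M12).mulVec v2) i) + ε * (M21.mulVec v1) i := by
      intro i
      have hsplit : u1 = u0 + ε • v1 := by
        funext j; simp [hu1def]
      rw [hsplit, Matrix.mulVec_add, Matrix.mulVec_smul, hM21u0]
      simp
    set v : (Fin n ⊕ Fin m) → ℝ := Sum.elim u1 v2 with hvdef
    have hvpos : ∀ i, 0 < v i := by
      rintro (i | i)
      · exact hu1pos i
      · exact hv2pos i
    have hAv : ∀ i, ((Matrix.fromBlocks M11 M12 M21 M22).mulVec v) i < 0 := by
      have hmv : (Matrix.fromBlocks M11 M12 M21 M22).mulVec v =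
          Sum.elim (M11.mulVec u1 + M12.mulVec v2) (M21.mulVec u1 + M22.mulVec v2) := by
        rw [hvdef, Matrix.fromBlocks_mulVec]
        simp
      rintro (i | i) <;> rw [hmv]
      · have h1 := hM11u1 i
        have h2 := mul_pos hεpos (hv1pos i)
        have h3 := hv1 i
        have h4 : ε * (M11.mulVec v1) i < 0 := mul_neg_of_pos_of_neg hεpos h3
        simp only [Sum.elim_inl, Pi.add_apply]
        rw [h1]
        simp only [hw]
        linarith
      · have h1 := hM21u1 i
        have h2 := hεlt i
        have h3 : ((M22 - M21 * M11⁻¹ * M12).mulVec v2) i =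
            (M22.mulVec v2) i - ((M21 * M11⁻¹ * M12).mulVec v2) i := by
          rw [Matrix.sub_mulVec]; rfl
        simp only [Sum.elim_inr, Pi.add_apply]
        rw [h1]
        rw [h3] at h2
        linarith
    exact pos_vec_hurwitz hMetz hvpos hAv
end
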